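/- Let d_z, d_x ∈ [−1,1], let U, V ∈ SO(2), and let S = V·diag(d_z,d_x)·U. For a real 2×2 matrix M define K(M) := 1 − h₂((1+d_z)/2) − h₂((1+d_x)/2) + h₂((1+‖M e₁‖)/2) − h₂((1+M₁₁)/2). Then K(Q_B·S·Q_A) ≤ 1 − h₂((1+d_z)/2) − h₂((1+d_x)/2) for all Q_A, Q_B ∈ SO(2), and equality holds for Q_A = Uᵀ and Q_B = Vᵀ; hence the supremum of K(Q_B·S·Q_A) over Q_A, Q_B ∈ SO(2) equals 1 − h₂((1+d_z)/2) − h₂((1+d_x)/2). -/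
import Mathlib


/-- Binary entropy function (base-2 logarithm), with the convention `0 * log 0 = 0`. -/
noncomputable def h2 (p : ℝ) : ℝ := -(p * Real.logb 2 p) - (1 - p) * Real.logb 2 (1 - p)

/-- `M` is a real 2×2 special orthogonal matrix. -/
def SO2 (M : Matrix (Fin 2) (Fin 2) ℝ) : Prop := M.transpose * M = 1 ∧ M.det = 1

/-- Euclidean norm of the first column of a 2×2 real matrix. -/
noncomputable def colNorm2 (M : Matrix (Fin 2) (Fin 2) ℝ) : ℝ :=
  Real.sqrt ((M 0 0) ^ 2 + (M 1 0) ^ 2)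

lemma h2_eq (p : ℝ) : h2 p = Real.binEntropy p / Real.log 2 := by
  simp only [h2, Real.binEntropy, Real.logb, Real.log_inv]
  ring

lemma h2_symm (p : ℝ) : h2 (1 - p) = h2 p := by
  rw [h2_eq, h2_eq, Real.binEntropy_one_sub]

lemma h2_anti {a b : ℝ} (ha : 2⁻¹ ≤ a) (hab : a ≤ b) (hb : b ≤ 1) : h2 b ≤ h2 a := by
  rw [h2_eq, h2_eq]
  refine (div_le_div_iff_of_pos_right (Real.log_pos (by norm_num))).mpr ?_
  exact Real.binEntropy_strictAntiOn.antitoneOn ⟨ha, le_trans hab hb⟩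
    ⟨le_trans ha hab, hb⟩ hab

lemma h2_abs (a : ℝ) : h2 ((1 + |a|) / 2) = h2 ((1 + a) / 2) := by
  rcases abs_cases a with ⟨h, _⟩ | ⟨h, _⟩
  · rw [h]
  · rw [h, show (1 + -a) / 2 = 1 - (1 + a) / 2 by ring, h2_symm]

lemma h2_key {a n : ℝ} (h1 : |a| ≤ n) (h2n : n ≤ 1) :
    h2 ((1 + n) / 2) ≤ h2 ((1 + a) / 2) := by
  rw [← h2_abs a]
  apply h2_anti
  · nlinarith [abs_nonneg a]
  · linarith
  · linarith

lemma SO2_transpose {M : Matrix (Fin 2) (Fin 2) ℝ} (h : SO2 M) : SO2 M.transpose := by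
  refine ⟨?_, by rw [Matrix.det_transpose]; exact h.2⟩
  rw [Matrix.transpose_transpose]
  exact mul_eq_one_comm.mp h.1

theorem stmt5 (dz dx : ℝ) (hdz : dz ∈ Set.Icc (-1 : ℝ) 1) (hdx : dx ∈ Set.Icc (-1 : ℝ) 1)
    (U V : Matrix (Fin 2) (Fin 2) ℝ) (hU : SO2 U) (hV : SO2 V)
    (S : Matrix (Fin 2) (Fin 2) ℝ)
    (hS : S = V * Matrix.diagonal ![dz, dx] * U)
    (K : Matrix (Fin 2) (Fin 2) ℝ → ℝ)
    (hK : ∀ M, K M = 1 - h2 ((1 + dz) / 2) - h2 ((1 + dx) / 2)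
      + h2 ((1 + colNorm2 M) / 2) - h2 ((1 + M 0 0) / 2)) :
    (∀ QA QB, SO2 QA → SO2 QB →
      K (QB * S * QA) ≤ 1 - h2 ((1 + dz) / 2) - h2 ((1 + dx) / 2)) ∧
    K (V.transpose * S * U.transpose) = 1 - h2 ((1 + dz) / 2) - h2 ((1 + dx) / 2) ∧
    sSup {r : ℝ | ∃ QA QB, SO2 QA ∧ SO2 QB ∧ r = K (QB * S * QA)} =
      1 - h2 ((1 + dz) / 2) - h2 ((1 + dx) / 2) := by
  set D : Matrix (Fin 2) (Fin 2) ℝ := Matrix.diagonal ![dz, dx] with hD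
  obtain ⟨hdz1, hdz2⟩ := hdz
  obtain ⟨hdx1, hdx2⟩ := hdx
  have hub : ∀ QA QB, SO2 QA → SO2 QB →
      K (QB * S * QA) ≤ 1 - h2 ((1 + dz) / 2) - h2 ((1 + dx) / 2) := by
    intro QA QB hQA hQB
    set A : Matrix (Fin 2) (Fin 2) ℝ := U * QA with hA
    set B : Matrix (Fin 2) (Fin 2) ℝ := QB * V with hB
    have hM : QB * S * QA = B * D * A := by
      rw [hS, hA, hB]; noncomm_ring
    have hAo : A.transpose * A = 1 := by
      rw [hA, Matrix.transpose_mul, Matrix.mul_assoc, ← Matrix.mul_assoc U.transpose,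
        hU.1, Matrix.one_mul, hQA.1]
    have hBo : B.transpose * B = 1 := by
      rw [hB, Matrix.transpose_mul, Matrix.mul_assoc, ← Matrix.mul_assoc QB.transpose,
        hQB.1, Matrix.one_mul, hV.1]
    -- entry equations
    have ea : A 0 0 ^ 2 + A 1 0 ^ 2 = 1 := by
      have := congrFun (congrFun hAo 0) 0
      simp [Matrix.mul_apply, Fin.sum_univ_two, Matrix.one_apply, Matrix.transpose_apply] at this
      nlinarith [this]
    have eb0 : B 0 0 ^ 2 + B 1 0 ^ 2 = 1 := by
      have := congrFun (congrFun hBo 0) 0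
      simp [Matrix.mul_apply, Fin.sum_univ_two, Matrix.one_apply, Matrix.transpose_apply] at this
      nlinarith [this]
    have eb1 : B 0 1 ^ 2 + B 1 1 ^ 2 = 1 := by
      have := congrFun (congrFun hBo 1) 1
      simp [Matrix.mul_apply, Fin.sum_univ_two, Matrix.one_apply, Matrix.transpose_apply] at this
      nlinarith [this]
    have ebo : B 0 0 * B 0 1 + B 1 0 * B 1 1 = 0 := by
      have := congrFun (congrFun hBo 0) 1
      simp [Matrix.mul_apply, Fin.sum_univ_two, Matrix.one_apply, Matrix.transpose_apply] at this
      linarith [this]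
    have hM00 : (B * D * A) 0 0 = B 0 0 * dz * A 0 0 + B 0 1 * dx * A 1 0 := by
      simp [hD, Matrix.mul_apply, Fin.sum_univ_two, Matrix.diagonal]
    have hM10 : (B * D * A) 1 0 = B 1 0 * dz * A 0 0 + B 1 1 * dx * A 1 0 := by
      simp [hD, Matrix.mul_apply, Fin.sum_univ_two, Matrix.diagonal]
    have hsum : (B * D * A) 0 0 ^ 2 + (B * D * A) 1 0 ^ 2 ≤ 1 := by
      have hz2 : dz ^ 2 ≤ 1 := by nlinarith
      have hx2 : dx ^ 2 ≤ 1 := by nlinarith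
      rw [hM00, hM10]
      calc (B 0 0 * dz * A 0 0 + B 0 1 * dx * A 1 0) ^ 2
            + (B 1 0 * dz * A 0 0 + B 1 1 * dx * A 1 0) ^ 2
          = dz ^ 2 * A 0 0 ^ 2 * (B 0 0 ^ 2 + B 1 0 ^ 2)
            + dx ^ 2 * A 1 0 ^ 2 * (B 0 1 ^ 2 + B 1 1 ^ 2)
            + 2 * (dz * A 0 0) * (dx * A 1 0) * (B 0 0 * B 0 1 + B 1 0 * B 1 1) := by ring
        _ = dz ^ 2 * A 0 0 ^ 2 + dx ^ 2 * A 1 0 ^ 2 := by rw [eb0, eb1, ebo]; ring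
        _ ≤ 1 := by nlinarith [sq_nonneg (A 0 0), sq_nonneg (A 1 0)]
    have hn1 : colNorm2 (B * D * A) ≤ 1 := by
      rw [colNorm2]
      calc Real.sqrt ((B * D * A) 0 0 ^ 2 + (B * D * A) 1 0 ^ 2) ≤ Real.sqrt 1 :=
            Real.sqrt_le_sqrt hsum
        _ = 1 := Real.sqrt_one
    have hn2 : |(B * D * A) 0 0| ≤ colNorm2 (B * D * A) := by
      rw [colNorm2, ← Real.sqrt_sq_eq_abs]
      exact Real.sqrt_le_sqrt (by nlinarith [sq_nonneg ((B * D * A) 1 0)])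
    rw [hK, hM]
    have := h2_key hn2 hn1
    linarith
  have hD00 : D 0 0 = dz := by simp [hD]
  have hD10 : D 1 0 = 0 := by simp [hD, Matrix.diagonal]
  have heqD : V.transpose * S * U.transpose = D := by
    rw [hS]
    calc V.transpose * (V * D * U) * U.transpose
        = (V.transpose * V) * D * (U * U.transpose) := by noncomm_ring
      _ = 1 * D * 1 := by rw [hV.1, mul_eq_one_comm.mp hU.1]
      _ = D := by simp
  have heq : K (V.transpose * S * U.transpose) =
      1 - h2 ((1 + dz) / 2) - h2 ((1 + dx) / 2) := by
    rw [heqD, hK]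
    have hcol : colNorm2 D = |dz| := by
      rw [colNorm2, hD00, hD10]
      simp [Real.sqrt_sq_eq_abs]
    rw [hcol, hD00, h2_abs]
    ring
  refine ⟨hub, heq, ?_⟩
  apply le_antisymm
  · apply csSup_le
    · exact ⟨K (V.transpose * S * U.transpose), U.transpose, V.transpose,
        SO2_transpose hU, SO2_transpose hV, rfl⟩
    · rintro r ⟨QA, QB, hQA, hQB, rfl⟩
      exact hub QA QB hQA hQB
  · rw [← heq]
    apply le_csSup
    · exact ⟨1 - h2 ((1 + dz) / 2) - h2 ((1 + dx) / 2), by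
        rintro r ⟨QA, QB, hQA, hQB, rfl⟩; exact hub QA QB hQA hQB⟩
    · exact ⟨U.transpose, V.transpose, SO2_transpose hU, SO2_transpose hV, rfl⟩
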